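/- arXiv:1909.09313 — 3 statements merged into one kernel-verified Lean document; each statement's English description precedes it below -/
import Mathlib

section
/- If g : ℝⁿ → ℝ is convex and differentiable with L-Lipschitz continuous gradient (L > 0), then ∇g is (1/L)-cocoercive, i.e., for all x, y: ⟨∇g(x) - ∇g(y), x - y⟩ ≥ (1/L)‖∇g(x) - ∇g(y)‖². -/
open RealInnerProductSpace Set

section Aux

variable {E : Type*} [NormedAddCommGroup E] [InnerProductSpace ℝ E] [CompleteSpace E]

private lemma bh_curve_hasDerivAt {g : E → ℝ} {g' : E → E}
    (hgrad : ∀ x, HasGradientAt g (g' x) x) (x d : E) (t : ℝ) :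
    HasDerivAt (fun s : ℝ => g (x + s • d)) ⟪g' (x + t • d), d⟫ t := by
  have hc : HasDerivAt (fun s : ℝ => x + s • d) d t := by
    simpa using ((hasDerivAt_id t).smul_const d).const_add x
  have hg : HasFDerivAt g (InnerProductSpace.toDual ℝ E (g' (x + t • d))) (x + t • d) :=
    hgrad (x + t • d)
  exact (hg.comp_hasDerivAt t hc).congr_deriv (by simp)

private lemma bh_grad_lower {g : E → ℝ} {g' : E → E} (hconv : ConvexOn ℝ univ g)
    (hgrad : ∀ x, HasGradientAt g (g' x) x) (x y : E) :
    g x + ⟪g' x, y - x⟫ ≤ g y := by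
  set φ : ℝ → ℝ := fun t => g (x + t • (y - x)) with hφdef
  have hφ : ConvexOn ℝ univ φ := by
    have h := hconv.comp_affineMap (AffineMap.lineMap x y)
    have he : φ = g ∘ (AffineMap.lineMap x y) := by
      funext t
      simp [hφdef, Function.comp, AffineMap.lineMap_apply_module']
      congr 1
      abel
    rw [he]
    simpa using h
  have hder : HasDerivAt φ ⟪g' x, y - x⟫ 0 := by
    simpa using bh_curve_hasDerivAt hgrad x (y - x) 0
  have hs := hφ.le_slope_of_hasDerivAt (mem_univ (0:ℝ)) (mem_univ (1:ℝ)) one_pos hder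
  rw [slope_def_field] at hs
  have h0 : φ 0 = g x := by simp [hφdef]
  have h1 : φ 1 = g y := by
    simp only [hφdef, one_smul]
    congr 1
    abel
  rw [h0, h1] at hs
  simp at hs
  linarith

private lemma bh_descent {g : E → ℝ} {g' : E → E} {L : ℝ} (hL : 0 < L)
    (hgrad : ∀ x, HasGradientAt g (g' x) x)
    (hlip : ∀ x y, ‖g' x - g' y‖ ≤ L * ‖x - y‖) (x d : E) :
    g (x + d) ≤ g x + ⟪g' x, d⟫ + L / 2 * ‖d‖ ^ 2 := by
  set ψ : ℝ → ℝ := fun t => g (x + t • d) - t * ⟪g' x, d⟫ - L / 2 * t ^ 2 * ‖d‖ ^ 2 with hψdef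
  have hψd : ∀ t : ℝ, HasDerivAt ψ (⟪g' (x + t • d), d⟫ - ⟪g' x, d⟫ - L * t * ‖d‖ ^ 2) t := by
    intro t
    have h1 := bh_curve_hasDerivAt hgrad x d t
    have h2 : HasDerivAt (fun t : ℝ => t * ⟪g' x, d⟫) ⟪g' x, d⟫ t := by
      simpa using (hasDerivAt_id t).mul_const (⟪g' x, d⟫ : ℝ)
    have h3 : HasDerivAt (fun t : ℝ => L / 2 * t ^ 2 * ‖d‖ ^ 2) (L * t * ‖d‖ ^ 2) t := by
      have := ((hasDerivAt_pow 2 t).const_mul (L / 2)).mul_const (‖d‖ ^ 2)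
      refine this.congr_deriv ?_
      ring
    exact (h1.sub h2).sub h3
  have key : ψ 1 ≤ ψ 0 := by
    have hanti : AntitoneOn ψ (Icc (0:ℝ) 1) := by
      apply antitoneOn_of_deriv_nonpos (convex_Icc 0 1)
      · exact fun t _ => ((hψd t).continuousAt).continuousWithinAt
      · exact fun t _ => ((hψd t).differentiableAt).differentiableWithinAt
      · intro t ht
        rw [interior_Icc] at ht
        rw [(hψd t).deriv]
        have hb : ⟪g' (x + t • d) - g' x, d⟫ ≤ L * t * ‖d‖ ^ 2 := by
          calc ⟪g' (x + t • d) - g' x, d⟫ ≤ ‖g' (x + t • d) - g' x‖ * ‖d‖ :=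
                real_inner_le_norm _ _
            _ ≤ (L * ‖x + t • d - x‖) * ‖d‖ :=
                mul_le_mul_of_nonneg_right (hlip _ _) (norm_nonneg d)
            _ = L * t * ‖d‖ ^ 2 := by
                rw [add_sub_cancel_left, norm_smul, Real.norm_eq_abs,
                  abs_of_nonneg ht.1.le]
                ring
        rw [inner_sub_left] at hb
        linarith
    exact hanti (left_mem_Icc.2 zero_le_one) (right_mem_Icc.2 zero_le_one) zero_le_one
  have e1 : ψ 1 = g (x + d) - ⟪g' x, d⟫ - L / 2 * ‖d‖ ^ 2 := by simp [hψdef]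
  have e0 : ψ 0 = g x := by simp [hψdef]
  rw [e1, e0] at key
  linarith

private lemma bh_key {g : E → ℝ} {g' : E → E} {L : ℝ} (hL : 0 < L)
    (hconv : ConvexOn ℝ univ g) (hgrad : ∀ x, HasGradientAt g (g' x) x)
    (hlip : ∀ x y, ‖g' x - g' y‖ ≤ L * ‖x - y‖) (x y : E) :
    g x + ⟪g' x, y - x⟫ + 1 / (2 * L) * ‖g' y - g' x‖ ^ 2 ≤ g y := by
  set h : E → ℝ := fun z => g z - ⟪g' x, z⟫ with hhdef
  set h' : E → E := fun z => g' z - g' x with hh'def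
  have hgrad' : ∀ z, HasGradientAt h (h' z) z := by
    intro z
    have h1 : HasFDerivAt g (InnerProductSpace.toDual ℝ E (g' z)) z := hgrad z
    have h2 : HasFDerivAt (fun w : E => (⟪g' x, w⟫ : ℝ))
        (InnerProductSpace.toDual ℝ E (g' x)) z := by
      have := (InnerProductSpace.toDual ℝ E (g' x)).hasFDerivAt (x := z)
      exact this.congr_fderiv rfl |>.congr_of_eventuallyEq
        (Filter.Eventually.of_forall fun w => by simp)
    have h3 := h1.sub h2
    rw [HasGradientAt, HasGradientAtFilter]
    rw [map_sub]
    exact h3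
  have hconv' : ConvexOn ℝ univ h := by
    apply hconv.sub
    refine ⟨convex_univ, fun a _ b _ s t hs ht hst => ?_⟩
    simp [inner_add_right, real_inner_smul_right, smul_eq_mul]
  have hlip' : ∀ a b, ‖h' a - h' b‖ ≤ L * ‖a - b‖ := by
    intro a b
    simpa [hh'def, sub_sub_sub_cancel_right] using hlip a b
  have hmin : ∀ z, h x ≤ h z := by
    intro z
    have hlow := bh_grad_lower hconv' hgrad' x z
    have : h' x = 0 := by simp [hh'def]
    rw [this] at hlow
    simpa using hlow
  set v : E := -(1 / L) • h' y with hvdef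
  have hdes := bh_descent hL hgrad' hlip' y v
  have hx := hmin (y + v)
  have e1 : ⟪h' y, v⟫ = -(1 / L) * ‖h' y‖ ^ 2 := by
    rw [hvdef, real_inner_smul_right, real_inner_self_eq_norm_sq]
  have e2 : ‖v‖ ^ 2 = (1 / L) ^ 2 * ‖h' y‖ ^ 2 := by
    rw [hvdef, norm_smul, Real.norm_eq_abs, abs_neg, abs_of_pos (by positivity : (0:ℝ) < 1 / L)]
    ring
  have hcomb : h x ≤ h y - 1 / (2 * L) * ‖h' y‖ ^ 2 := by
    have hc := hx.trans hdes
    rw [e1, e2] at hc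
    have ef : L / 2 * ((1 / L) ^ 2 * ‖h' y‖ ^ 2) - (1 / L) * ‖h' y‖ ^ 2
        = -(1 / (2 * L)) * ‖h' y‖ ^ 2 := by
      field_simp
      ring
    nlinarith [hc, ef]
  have hun : g x - ⟪g' x, x⟫ ≤ g y - ⟪g' x, y⟫ - 1 / (2 * L) * ‖g' y - g' x‖ ^ 2 := hcomb
  rw [inner_sub_right]
  linarith

end Aux

theorem baillon_haddad {n : ℕ} (g : EuclideanSpace ℝ (Fin n) → ℝ)
    (g' : EuclideanSpace ℝ (Fin n) → EuclideanSpace ℝ (Fin n)) (L : ℝ) (hL : 0 < L)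
    (hconv : ConvexOn ℝ Set.univ g)
    (hgrad : ∀ x, HasGradientAt g (g' x) x)
    (hlip : ∀ x y, ‖g' x - g' y‖ ≤ L * ‖x - y‖) :
    ∀ x y : EuclideanSpace ℝ (Fin n),
      (1 / L) * ‖g' x - g' y‖ ^ 2 ≤ ⟪g' x - g' y, x - y⟫ := by
  intro x y
  have k1 := bh_key hL hconv hgrad hlip x y
  have k2 := bh_key hL hconv hgrad hlip y x
  rw [show (‖g' y - g' x‖ = ‖g' x - g' y‖) from norm_sub_rev _ _] at k1
  rw [inner_sub_left, inner_sub_right, inner_sub_right]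
  rw [inner_sub_right] at k1 k2
  have hsum : (1 / (2 * L)) * ‖g' x - g' y‖ ^ 2 + (1 / (2 * L)) * ‖g' x - g' y‖ ^ 2
      = (1 / L) * ‖g' x - g' y‖ ^ 2 := by
    rw [← add_mul]
    congr 1
    field_simp
    norm_num
  linarith
end

section
/- If g : ℝⁿ → ℝ is convex and differentiable with L-Lipschitz gradient, then the operator x ↦ x - (2/L)∇g(x) is nonexpansive. -/
open Set InnerProductSpace

local notation "⟪" x ", " y "⟫" => @inner ℝ _ _ x y

variable {E : Type*} [NormedAddCommGroup E] [InnerProductSpace ℝ E] [CompleteSpace E]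

/-- Derivative of `g` along a line, expressed via the gradient. -/
lemma line_hasDerivAt (g : E → ℝ) (g' : E → E)
    (hgrad : ∀ x, HasGradientAt g (g' x) x) (x v : E) (t : ℝ) :
    HasDerivAt (fun s : ℝ => g (x + s • v)) ⟪g' (x + t • v), v⟫ t := by
  have hc : HasDerivAt (fun s : ℝ => x + s • v) v t := by
    simpa using ((hasDerivAt_id t).smul_const v).const_add x
  have h := ((hgrad (x + t • v)).hasFDerivAt).comp_hasDerivAt t hc
  simpa [InnerProductSpace.toDual_apply_apply, Function.comp_def] using h

/-- Convexity of the restriction of a convex function to a line. -/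
lemma line_convexOn (g : E → ℝ) (hconv : ConvexOn ℝ univ g) (x v : E) :
    ConvexOn ℝ univ (fun s : ℝ => g (x + s • v)) := by
  have h := hconv.comp_affineMap (AffineMap.lineMap x (x + v))
  have he : (fun s : ℝ => g (x + s • v)) = g ∘ (AffineMap.lineMap x (x + v)) := by
    funext s
    simp [AffineMap.lineMap_apply, add_comm]
  rw [he]
  simpa using h

/-- First-order condition for convexity. -/
lemma grad_ineq (g : E → ℝ) (g' : E → E) (hconv : ConvexOn ℝ univ g)
    (hgrad : ∀ x, HasGradientAt g (g' x) x) (x y : E) :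
    g x + ⟪g' x, y - x⟫ ≤ g y := by
  set v := y - x with hv
  have hd := line_hasDerivAt g g' hgrad x v
  have hc := line_convexOn g hconv x v
  have h := hc.le_slope_of_hasDerivAt (mem_univ (0:ℝ)) (mem_univ (1:ℝ)) zero_lt_one
    (by simpa using hd 0)
  rw [slope_def_field] at h
  have h0 : x + (0:ℝ) • v = x := by simp
  have h1 : x + (1:ℝ) • v = y := by simp [hv]
  rw [h0, h1] at h
  simp at h
  linarith

/-- Descent lemma: quadratic upper bound from Lipschitz gradient. -/
lemma descent_lemma (g : E → ℝ) (g' : E → E) (L : ℝ) (hL : 0 < L)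
    (hgrad : ∀ x, HasGradientAt g (g' x) x)
    (hlip : ∀ x y, ‖g' x - g' y‖ ≤ L * ‖x - y‖) (x y : E) :
    g y ≤ g x + ⟪g' x, y - x⟫ + L / 2 * ‖y - x‖ ^ 2 := by
  set v := y - x with hv
  set ψ : ℝ → ℝ := fun t => g (x + t • v) - t * ⟪g' x, v⟫ - L / 2 * t ^ 2 * ‖v‖ ^ 2 with hψ
  have hψd : ∀ t : ℝ, HasDerivAt ψ
      (⟪g' (x + t • v), v⟫ - ⟪g' x, v⟫ - L * t * ‖v‖ ^ 2) t := by
    intro t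
    have h1 := line_hasDerivAt g g' hgrad x v t
    have h2 : HasDerivAt (fun t : ℝ => t * ⟪g' x, v⟫) ⟪g' x, v⟫ t := by
      simpa using (hasDerivAt_id t).mul_const ⟪g' x, v⟫
    have h3 : HasDerivAt (fun t : ℝ => L / 2 * t ^ 2 * ‖v‖ ^ 2) (L * t * ‖v‖ ^ 2) t := by
      have := ((hasDerivAt_pow 2 t).const_mul (L / 2)).mul_const (‖v‖ ^ 2)
      exact this.congr_deriv (by ring)
    exact (h1.sub h2).sub h3
  have key : ∀ t ∈ interior (Icc (0:ℝ) 1), deriv ψ t ≤ 0 := by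
    intro t ht
    rw [interior_Icc] at ht
    rw [(hψd t).deriv]
    have h1 : ⟪g' (x + t • v), v⟫ - ⟪g' x, v⟫ = ⟪g' (x + t • v) - g' x, v⟫ := by
      rw [inner_sub_left]
    rw [h1]
    have h2 : ⟪g' (x + t • v) - g' x, v⟫ ≤ ‖g' (x + t • v) - g' x‖ * ‖v‖ :=
      real_inner_le_norm _ _
    have h3 : ‖g' (x + t • v) - g' x‖ ≤ L * ‖t • v‖ := by
      have := hlip (x + t • v) x
      simpa using this
    have h4 : ‖t • v‖ = t * ‖v‖ := by
      rw [norm_smul, Real.norm_eq_abs, abs_of_pos ht.1]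
    rw [h4] at h3
    nlinarith [h2, mul_le_mul_of_nonneg_right h3 (norm_nonneg v), norm_nonneg v]
  have hanti : AntitoneOn ψ (Icc (0:ℝ) 1) := by
    apply antitoneOn_of_deriv_nonpos (convex_Icc 0 1)
    · exact fun t _ => (hψd t).continuousAt.continuousWithinAt
    · exact fun t _ => ((hψd t).differentiableAt).differentiableWithinAt
    · exact key
  have h01 := hanti (Set.left_mem_Icc.mpr zero_le_one) (Set.right_mem_Icc.mpr zero_le_one)
    zero_le_one
  have h0 : ψ 0 = g x := by simp [hψ]
  have h1 : ψ 1 = g y - ⟪g' x, v⟫ - L / 2 * ‖v‖ ^ 2 := by simp [hψ, hv]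
  rw [h0, h1] at h01
  linarith

/-- Key one-sided inequality towards cocoercivity. -/
lemma coco_half (g : E → ℝ) (g' : E → E) (L : ℝ) (hL : 0 < L)
    (hconv : ConvexOn ℝ univ g)
    (hgrad : ∀ x, HasGradientAt g (g' x) x)
    (hlip : ∀ x y, ‖g' x - g' y‖ ≤ L * ‖x - y‖) (x y : E) :
    g y + ⟪g' y, x - y⟫ + 1 / (2 * L) * ‖g' x - g' y‖ ^ 2 ≤ g x := by
  set d := g' x - g' y with hd
  set z := x - (1 / L) • d with hz
  have h1 := grad_ineq g g' hconv hgrad y z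
  have h2 := descent_lemma g g' L hL hgrad hlip x z
  have hzx : z - x = -((1 / L) • d) := by rw [hz]; abel
  have hzy : z - y = (x - y) - (1 / L) • d := by rw [hz]; abel
  have e1 : ⟪g' x, z - x⟫ = -(1 / L) * ⟪g' x, d⟫ := by
    rw [hzx, inner_neg_right, real_inner_smul_right]; ring
  have e2 : ⟪g' y, z - y⟫ = ⟪g' y, x - y⟫ - (1 / L) * ⟪g' y, d⟫ := by
    rw [hzy, inner_sub_right, real_inner_smul_right]
  have e3 : ‖z - x‖ ^ 2 = (1 / L) ^ 2 * ‖d‖ ^ 2 := by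
    rw [hzx, norm_neg, norm_smul, Real.norm_eq_abs, mul_pow, sq_abs]
  have e4 : ⟪g' x, d⟫ - ⟪g' y, d⟫ = ‖d‖ ^ 2 := by
    rw [← inner_sub_left, ← hd, real_inner_self_eq_norm_sq]
  have hL2 : L ≠ 0 := ne_of_gt hL
  rw [e2] at h1
  rw [e1, e3] at h2
  have hA : L / 2 * ((1 / L) ^ 2 * ‖d‖ ^ 2) = 1 / (2 * L) * ‖d‖ ^ 2 := by
    field_simp
  have hB : (1 / L) * ⟪g' x, d⟫ - (1 / L) * ⟪g' y, d⟫ = (1 / L) * ‖d‖ ^ 2 := by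
    rw [← mul_sub, e4]
  have hC : (1 / L) * ‖d‖ ^ 2 = 1 / (2 * L) * ‖d‖ ^ 2 + 1 / (2 * L) * ‖d‖ ^ 2 := by
    field_simp; ring
  linarith

/-- Baillon–Haddad cocoercivity. -/
lemma cocoercive (g : E → ℝ) (g' : E → E) (L : ℝ) (hL : 0 < L)
    (hconv : ConvexOn ℝ univ g)
    (hgrad : ∀ x, HasGradientAt g (g' x) x)
    (hlip : ∀ x y, ‖g' x - g' y‖ ≤ L * ‖x - y‖) (x y : E) :
    (1 / L) * ‖g' x - g' y‖ ^ 2 ≤ ⟪g' x - g' y, x - y⟫ := by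
  have h1 := coco_half g g' L hL hconv hgrad hlip x y
  have h2 := coco_half g g' L hL hconv hgrad hlip y x
  have e1 : ‖g' y - g' x‖ = ‖g' x - g' y‖ := norm_sub_rev _ _
  rw [e1] at h2
  have e2 : ⟪g' y, x - y⟫ + ⟪g' x, y - x⟫ = -⟪g' x - g' y, x - y⟫ := by
    have hyx : y - x = -(x - y) := by abel
    rw [hyx, inner_neg_right, inner_sub_left]; ring
  have e3 : 1 / (2 * L) * ‖g' x - g' y‖ ^ 2 + 1 / (2 * L) * ‖g' x - g' y‖ ^ 2
      = (1 / L) * ‖g' x - g' y‖ ^ 2 := by field_simp; ring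
  linarith [h1, h2, e2, e3]

theorem grad_step_nonexpansive {n : ℕ} (g : EuclideanSpace ℝ (Fin n) → ℝ)
    (g' : EuclideanSpace ℝ (Fin n) → EuclideanSpace ℝ (Fin n)) (L : ℝ) (hL : 0 < L)
    (hconv : ConvexOn ℝ Set.univ g)
    (hgrad : ∀ x, HasGradientAt g (g' x) x)
    (hlip : ∀ x y, ‖g' x - g' y‖ ≤ L * ‖x - y‖) :
    ∀ x y : EuclideanSpace ℝ (Fin n),
      ‖(x - (2 / L) • g' x) - (y - (2 / L) • g' y)‖ ≤ ‖x - y‖ := by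
  intro x y
  set d : EuclideanSpace ℝ (Fin n) := g' x - g' y with hd
  have hco := cocoercive g g' L hL hconv hgrad hlip x y
  have hre : (x - (2 / L) • g' x) - (y - (2 / L) • g' y) = (x - y) - (2 / L) • d := by
    rw [hd, smul_sub]; abel
  rw [hre]
  have hsq : ‖(x - y) - (2 / L) • d‖ ^ 2 ≤ ‖x - y‖ ^ 2 := by
    rw [norm_sub_sq_real]
    have e1 : ⟪x - y, (2 / L) • d⟫ = (2 / L) * ⟪d, x - y⟫ := by
      rw [real_inner_smul_right, real_inner_comm]
    have e2 : ‖(2 / L) • d‖ ^ 2 = (2 / L) ^ 2 * ‖d‖ ^ 2 := by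
      rw [norm_smul, Real.norm_eq_abs, mul_pow, sq_abs]
    rw [e1, e2]
    have h3 : (2 / L) * ((1 / L) * ‖d‖ ^ 2) ≤ (2 / L) * ⟪d, x - y⟫ :=
      mul_le_mul_of_nonneg_left hco (by positivity)
    have h4 : (2 / L) ^ 2 * ‖d‖ ^ 2 = 2 * ((2 / L) * ((1 / L) * ‖d‖ ^ 2)) := by
      field_simp
    nlinarith
  exact (pow_le_pow_iff_left₀ (norm_nonneg _) (norm_nonneg _) two_ne_zero).mp hsq
end

section
/- Let g : ℝⁿ → ℝ be convex differentiable with L_g-Lipschitz gradient, D nonexpansive, τ > 0, G = ∇g + τ(I - D) with a zero x* satisfying ‖x⁰ - x*‖ ≤ R₀. Run the iteration x^k = x^{k-1} - γG(x^{k-1}) with 0 < γ ≤ 1/(L_g + 2τ). Then for all t ≥ 1, ‖G(x^{t-1})‖² ≤ ((L_g + 2τ)/(γt))R₀². -/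
open RealInnerProductSpace

variable {F : Type*} [NormedAddCommGroup F] [InnerProductSpace ℝ F] [CompleteSpace F]

lemma aux_dirDeriv (g : F → ℝ) (g' : F → F) (hgrad : ∀ x, HasGradientAt g (g' x) x)
    (x d : F) (t : ℝ) :
    HasDerivAt (fun s : ℝ => g (x + s • d)) (⟪g' (x + t • d), d⟫) t := by
  have h1 : HasDerivAt (fun s : ℝ => x + s • d) d t := by
    simpa using ((hasDerivAt_id t).smul_const d).const_add x
  have h2 := (hasGradientAt_iff_hasFDerivAt.mp (hgrad (x + t • d))).comp_hasDerivAt t h1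
  simp [InnerProductSpace.toDual_apply_apply] at h2
  exact h2

lemma aux_firstorder (g : F → ℝ) (g' : F → F) (hconv : ConvexOn ℝ Set.univ g)
    (hgrad : ∀ x, HasGradientAt g (g' x) x) (x y : F) :
    g x + ⟪g' x, y - x⟫ ≤ g y := by
  set d := y - x with hd
  set φ : ℝ → ℝ := fun t => g (x + t • d) with hφ
  have hφc : ConvexOn ℝ Set.univ φ := by
    have h := hconv.comp_affineMap (AffineMap.lineMap x y : ℝ →ᵃ[ℝ] F)
    have : φ = g ∘ (AffineMap.lineMap x y : ℝ →ᵃ[ℝ] F) := by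
      funext t
      simp [hφ, AffineMap.lineMap_apply, hd]
      rw [add_comm]
    rw [this]
    simpa using h
  have h := hφc.le_slope_of_hasDerivAt (Set.mem_univ 0) (Set.mem_univ 1) one_pos
    (aux_dirDeriv g g' hgrad x d 0)
  rw [slope_def_field] at h
  simp at h
  have h0 : x + (1:ℝ) • d = y := by simp [hd]
  have h1 : x + (0:ℝ) • d = x := by simp
  have hφ1 : φ 1 = g y := by simp only [hφ, one_smul, hd]; congr 1; abel
  have hφ0 : φ 0 = g x := by simp only [hφ, zero_smul, add_zero]
  rw [hφ1, hφ0] at h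
  linarith

lemma aux_descent (g : F → ℝ) (g' : F → F) (Lg : ℝ) (hL : 0 < Lg)
    (hgrad : ∀ x, HasGradientAt g (g' x) x)
    (hlip : ∀ x y, ‖g' x - g' y‖ ≤ Lg * ‖x - y‖) (x y : F) :
    g y ≤ g x + ⟪g' x, y - x⟫ + Lg / 2 * ‖y - x‖ ^ 2 := by
  set d := y - x with hd
  set φ : ℝ → ℝ := fun t => g (x + t • d) with hφ
  have hcontg' : Continuous g' := by
    have : LipschitzWith (Real.toNNReal Lg) g' := by
      apply LipschitzWith.of_dist_le_mul
      intro a b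
      simpa [dist_eq_norm, Real.coe_toNNReal _ hL.le] using hlip a b
    exact this.continuous
  set ψ : ℝ → ℝ := fun t => ⟪g' (x + t • d), d⟫ with hψ
  have hcontψ : Continuous ψ := by
    apply Continuous.inner
    · exact hcontg'.comp (continuous_const.add (continuous_id.smul continuous_const))
    · exact continuous_const
  have hFTC : ∫ t in (0:ℝ)..1, ψ t = φ 1 - φ 0 := by
    apply intervalIntegral.integral_eq_sub_of_hasDerivAt
    · intro t _
      exact aux_dirDeriv g g' hgrad x d t
    · exact hcontψ.intervalIntegrable 0 1
  have hptwise : ∀ t ∈ Set.Icc (0:ℝ) 1, ψ t ≤ ⟪g' x, d⟫ + (Lg * ‖d‖ ^ 2) * t := by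
    intro t ht
    have h1 : ⟪g' (x + t • d) - g' x, d⟫ ≤ ‖g' (x + t • d) - g' x‖ * ‖d‖ :=
      real_inner_le_norm _ _
    have h2 : ‖g' (x + t • d) - g' x‖ ≤ Lg * (t * ‖d‖) := by
      have := hlip (x + t • d) x
      simpa [norm_smul, abs_of_nonneg ht.1, mul_assoc] using this
    have h3 : ⟪g' (x + t • d) - g' x, d⟫ = ψ t - ⟪g' x, d⟫ := by
      rw [inner_sub_left]
    nlinarith [norm_nonneg d, norm_nonneg (g' (x + t • d) - g' x), ht.1]
  have hint2 : IntervalIntegrable (fun t : ℝ => ⟪g' x, d⟫ + (Lg * ‖d‖ ^ 2) * t)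
      MeasureTheory.volume 0 1 :=
    (Continuous.intervalIntegrable (by continuity) 0 1)
  have hmono := intervalIntegral.integral_mono_on (zero_le_one)
    (hcontψ.intervalIntegrable 0 1) hint2 hptwise
  have hval : ∫ t in (0:ℝ)..1, (⟪g' x, d⟫ + (Lg * ‖d‖ ^ 2) * t) =
      ⟪g' x, d⟫ + Lg / 2 * ‖d‖ ^ 2 := by
    rw [intervalIntegral.integral_add (intervalIntegrable_const)
      ((intervalIntegral.intervalIntegrable_id).const_mul _),
      intervalIntegral.integral_const_mul, integral_id]
    simp
    ring
  have hφ1 : φ 1 = g y := by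
    simp only [hφ, one_smul, hd]; congr 1; abel
  have hφ0 : φ 0 = g x := by simp only [hφ, zero_smul, add_zero]
  rw [hFTC, hval, hφ1, hφ0] at hmono
  linarith

lemma aux_coco_g (g : F → ℝ) (g' : F → F) (Lg : ℝ) (hL : 0 < Lg)
    (hconv : ConvexOn ℝ Set.univ g)
    (hgrad : ∀ x, HasGradientAt g (g' x) x)
    (hlip : ∀ x y, ‖g' x - g' y‖ ≤ Lg * ‖x - y‖) (a b : F) :
    (1 / Lg) * ‖g' a - g' b‖ ^ 2 ≤ ⟪g' a - g' b, a - b⟫ := by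
  have key : ∀ p q : F,
      g p + ⟪g' p, q - p⟫ + (1 / (2 * Lg)) * ‖g' q - g' p‖ ^ 2 ≤ g q := by
    intro p q
    set u := g' q - g' p with hu
    set c : ℝ := Lg⁻¹ with hc
    set z := q - c • u with hz
    have h1 := aux_firstorder g g' hconv hgrad p z
    have h2 := aux_descent g g' Lg hL hgrad hlip q z
    have hzq : z - q = -(c • u) := by rw [hz]; abel
    have e1 : ⟪g' q, z - q⟫ = -(c * ⟪g' q, u⟫) := by
      rw [hzq, inner_neg_right, real_inner_smul_right]
    have e2 : ‖z - q‖ ^ 2 = c ^ 2 * ‖u‖ ^ 2 := by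
      rw [hzq, norm_neg, norm_smul, mul_pow]
      congr 1
      rw [Real.norm_eq_abs, sq_abs]
    have hzp : z - p = (q - p) - c • u := by rw [hz]; abel
    have e3 : ⟪g' p, z - p⟫ = ⟪g' p, q - p⟫ - c * ⟪g' p, u⟫ := by
      rw [hzp, inner_sub_right, real_inner_smul_right]
    have e4 : ⟪g' q, u⟫ - ⟪g' p, u⟫ = ‖u‖ ^ 2 := by
      rw [← inner_sub_left, ← hu, real_inner_self_eq_norm_sq]
    rw [e1, e2] at h2
    rw [e3] at h1
    have hLne : Lg ≠ 0 := hL.ne'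
    have hcL : c * Lg = 1 := inv_mul_cancel₀ hLne
    have hgoal : (1 / (2 * Lg)) * ‖u‖ ^ 2 =
        c * ‖u‖ ^ 2 - Lg / 2 * (c ^ 2 * ‖u‖ ^ 2) := by
      field_simp [hc]
      linear_combination (‖u‖ ^ 2 * (c * Lg - 1)) * hcL
    nlinarith [h1, h2, e4]
  have k1 := key a b
  have k2 := key b a
  have e5 : ‖g' b - g' a‖ = ‖g' a - g' b‖ := norm_sub_rev _ _
  rw [e5] at k1
  have e6 : ⟪g' a - g' b, a - b⟫ = -(⟪g' a, b - a⟫ + ⟪g' b, a - b⟫) := by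
    rw [inner_sub_left]
    have : (b : F) - a = -(a - b) := by abel
    rw [this, inner_neg_right]
    ring
  have hfrac : (1 : ℝ) / Lg = 2 * (1 / (2 * Lg)) := by field_simp
  rw [e6, hfrac]
  linarith [k1, k2]

set_option maxHeartbeats 2000000 in
theorem msred_convergence {n : ℕ} (g : EuclideanSpace ℝ (Fin n) → ℝ)
    (g' D : EuclideanSpace ℝ (Fin n) → EuclideanSpace ℝ (Fin n)) (Lg τ : ℝ)
    (hL : 0 < Lg) (hτ : 0 < τ)
    (hconv : ConvexOn ℝ Set.univ g)
    (hgrad : ∀ x, HasGradientAt g (g' x) x)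
    (hlip : ∀ x y, ‖g' x - g' y‖ ≤ Lg * ‖x - y‖)
    (hD : ∀ x y, ‖D x - D y‖ ≤ ‖x - y‖)
    (G : EuclideanSpace ℝ (Fin n) → EuclideanSpace ℝ (Fin n))
    (hG : ∀ x, G x = g' x + τ • (x - D x))
    (xs : EuclideanSpace ℝ (Fin n)) (hxs : G xs = 0)
    (γ : ℝ) (hγ : 0 < γ) (hγ' : γ ≤ 1 / (Lg + 2 * τ))
    (x : ℕ → EuclideanSpace ℝ (Fin n))
    (hx : ∀ k : ℕ, x (k + 1) = x k - γ • G (x k))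
    (R₀ : ℝ) (hR₀ : ‖x 0 - xs‖ ≤ R₀) :
    ∀ t : ℕ, 1 ≤ t →
      ‖G (x (t - 1))‖ ^ 2 ≤ ((Lg + 2 * τ) / (γ * t)) * R₀ ^ 2 := by
  set L : ℝ := Lg + 2 * τ with hLdef
  have hLpos : 0 < L := by positivity
  have hγL : γ * L ≤ 1 := by
    rw [le_div_iff₀ hLpos] at hγ'
    exact hγ'
  -- cocoercivity of G
  have hco : ∀ a b : EuclideanSpace ℝ (Fin n),
      (1 / L) * ‖G a - G b‖ ^ 2 ≤ ⟪G a - G b, a - b⟫ := by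
    intro a b
    set A := g' a - g' b with hA
    set B := (a - D a) - (b - D b) with hB
    set w := a - b with hw
    have hGdiff : G a - G b = A + τ • B := by
      rw [hG a, hG b, hA, hB]
      module
    have hcA : (1 / Lg) * ‖A‖ ^ 2 ≤ ⟪A, w⟫ :=
      aux_coco_g g g' Lg hL hconv hgrad hlip a b
    have hcB : (1 / 2) * ‖B‖ ^ 2 ≤ ⟪B, w⟫ := by
      set v := D a - D b with hv
      have hvw : ‖v‖ ≤ ‖w‖ := hD a b
      have hBwv : B = w - v := by rw [hB, hw, hv]; abel
      have e1 : ⟪B, w⟫ = ‖w‖ ^ 2 - ⟪v, w⟫ := by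
        rw [hBwv, inner_sub_left, real_inner_self_eq_norm_sq]
      have e2 : ‖B‖ ^ 2 = ‖w‖ ^ 2 - 2 * ⟪v, w⟫ + ‖v‖ ^ 2 := by
        rw [hBwv, @norm_sub_sq_real, real_inner_comm]
      rw [e1, e2]
      nlinarith [norm_nonneg v, norm_nonneg w]
    have hinner : ⟪G a - G b, w⟫ = ⟪A, w⟫ + τ * ⟪B, w⟫ := by
      rw [hGdiff, inner_add_left, real_inner_smul_left]
    have hnormsq : ‖G a - G b‖ ^ 2 = ‖A‖ ^ 2 + 2 * τ * ⟪A, B⟫ + τ ^ 2 * ‖B‖ ^ 2 := by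
      rw [hGdiff, @norm_add_sq_real, real_inner_smul_right, norm_smul,
        Real.norm_eq_abs, abs_of_pos hτ, mul_pow]
      ring
    have hAB : ⟪A, B⟫ ≤ ‖A‖ * ‖B‖ := real_inner_le_norm A B
    have hcA2 : ‖A‖ ^ 2 ≤ Lg * ⟪A, w⟫ := by
      have h := mul_le_mul_of_nonneg_left hcA hL.le
      calc ‖A‖ ^ 2 = Lg * (1 / Lg * ‖A‖ ^ 2) := by field_simp
        _ ≤ Lg * ⟪A, w⟫ := h
    have hcB2 : ‖B‖ ^ 2 ≤ 2 * ⟪B, w⟫ := by linarith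
    rw [hinner, hnormsq, div_mul_eq_mul_div, div_le_iff₀ hLpos, hLdef]
    rw [← mul_le_mul_iff_right₀ hL]
    have p1 : (Lg + 2 * τ) * ‖A‖ ^ 2 ≤ (Lg + 2 * τ) * (Lg * ⟪A, w⟫) :=
      mul_le_mul_of_nonneg_left hcA2 (by positivity)
    have p2 : τ * Lg * (Lg + 2 * τ) * ‖B‖ ^ 2 ≤ τ * Lg * (Lg + 2 * τ) * (2 * ⟪B, w⟫) :=
      mul_le_mul_of_nonneg_left hcB2 (by positivity)
    have h6 : Lg * (2 * τ * ⟪A, B⟫) ≤ Lg * (2 * τ * (‖A‖ * ‖B‖)) := by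
      apply mul_le_mul_of_nonneg_left _ hL.le
      apply mul_le_mul_of_nonneg_left hAB (by positivity)
    have h7 : 0 ≤ τ * (2 * ‖A‖ - Lg * ‖B‖) ^ 2 := by positivity
    nlinarith [p1, p2, h6, h7]
  -- descent of the residual norm
  have step_b : ∀ k : ℕ, ‖G (x (k + 1))‖ ^ 2 ≤ ‖G (x k)‖ ^ 2 := by
    intro k
    have hdiff : x (k + 1) - x k = -(γ • G (x k)) := by rw [hx k]; abel
    have h := hco (x (k + 1)) (x k)
    rw [hdiff] at h
    set Δ := G (x (k + 1)) - G (x k) with hΔ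
    have e1 : ⟪Δ, -(γ • G (x k))⟫ = -(γ * ⟪Δ, G (x k)⟫) := by
      rw [inner_neg_right, real_inner_smul_right]
    rw [e1] at h
    have e2 : ‖G (x (k + 1))‖ ^ 2 = ‖G (x k)‖ ^ 2 + 2 * ⟪Δ, G (x k)⟫ + ‖Δ‖ ^ 2 := by
      have : G (x (k + 1)) = G (x k) + Δ := by rw [hΔ]; abel
      rw [this, @norm_add_sq_real, real_inner_comm]
    have hΔL : ‖Δ‖ ^ 2 ≤ -(γ * L * ⟪Δ, G (x k)⟫) := by
      have := mul_le_mul_of_nonneg_left h hLpos.le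
      have hL1 : L * (1 / L * ‖Δ‖ ^ 2) = ‖Δ‖ ^ 2 := by field_simp
      rw [hL1] at this
      linarith [this]
    have hc_nonpos : ⟪Δ, G (x k)⟫ ≤ 0 := by
      nlinarith [sq_nonneg ‖Δ‖, mul_pos hγ hLpos]
    nlinarith [hΔL, hc_nonpos, hγL, sq_nonneg ‖Δ‖, mul_pos hγ hLpos]
  -- decrease of distance to xs
  have step_a : ∀ k : ℕ, ‖x (k + 1) - xs‖ ^ 2 ≤
      ‖x k - xs‖ ^ 2 - (γ / L) * ‖G (x k)‖ ^ 2 := by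
    intro k
    have h := hco (x k) xs
    rw [hxs, sub_zero] at h
    have e1 : x (k + 1) - xs = (x k - xs) - γ • G (x k) := by rw [hx k]; abel
    have e2 : ‖x (k + 1) - xs‖ ^ 2 = ‖x k - xs‖ ^ 2
        - 2 * (γ * ⟪G (x k), x k - xs⟫) + γ ^ 2 * ‖G (x k)‖ ^ 2 := by
      rw [e1, @norm_sub_sq_real, real_inner_smul_right, norm_smul,
        Real.norm_eq_abs, abs_of_pos hγ, mul_pow, real_inner_comm]
    rw [e2]
    have h3 : (γ / L) * ‖G (x k)‖ ^ 2 = γ * ((1 / L) * ‖G (x k)‖ ^ 2) := by ring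
    have h4 : γ * ((1 / L) * ‖G (x k)‖ ^ 2) ≤ γ * ⟪G (x k), x k - xs⟫ :=
      mul_le_mul_of_nonneg_left h hγ.le
    have h5 : γ ^ 2 * ‖G (x k)‖ ^ 2 ≤ γ * ((1 / L) * ‖G (x k)‖ ^ 2) := by
      have : γ ^ 2 ≤ γ * (1 / L) := by
        rw [sq]
        exact mul_le_mul_of_nonneg_left hγ' hγ.le
      nlinarith [sq_nonneg ‖G (x k)‖]
    nlinarith [h3, h4, h5]
  -- main estimate by induction
  have claim : ∀ s : ℕ, ‖x (s + 1) - xs‖ ^ 2 + (γ / L) * (s + 1 : ℝ) * ‖G (x s)‖ ^ 2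
      ≤ ‖x 0 - xs‖ ^ 2 := by
    intro s
    induction s with
    | zero =>
      have := step_a 0
      push_cast
      linarith
    | succ s ih =>
      have hb := step_b s
      have ha := step_a (s + 1)
      have hglL : 0 ≤ γ / L := by positivity
      have : (γ / L) * ((s : ℝ) + 1 + 1) * ‖G (x (s + 1))‖ ^ 2
          ≤ (γ / L) * ‖G (x (s + 1))‖ ^ 2 + (γ / L) * ((s : ℝ) + 1) * ‖G (x s)‖ ^ 2 := by
        have hb2 : (γ / L) * ((s : ℝ) + 1) * ‖G (x (s + 1))‖ ^ 2
            ≤ (γ / L) * ((s : ℝ) + 1) * ‖G (x s)‖ ^ 2 := by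
          rw [mul_assoc, mul_assoc]
          apply mul_le_mul_of_nonneg_left _ hglL
          apply mul_le_mul_of_nonneg_left hb (by positivity)
        nlinarith [hb2]
      push_cast
      push_cast at ih
      nlinarith [ha, ih, this]
  intro t ht
  obtain ⟨s, rfl⟩ : ∃ s : ℕ, t = s + 1 := ⟨t - 1, (Nat.succ_pred_eq_of_pos ht).symm⟩
  simp only [Nat.add_sub_cancel]
  have hc := claim s
  have hR2 : ‖x 0 - xs‖ ^ 2 ≤ R₀ ^ 2 := by
    have h0 : (0:ℝ) ≤ ‖x 0 - xs‖ := norm_nonneg _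
    nlinarith
  have hkey : (γ / L) * (s + 1 : ℝ) * ‖G (x s)‖ ^ 2 ≤ R₀ ^ 2 := by
    nlinarith [sq_nonneg ‖x (s + 1) - xs‖]
  have htpos : (0:ℝ) < (s + 1 : ℝ) := by positivity
  have hcast : ((s + 1 : ℕ) : ℝ) = (s : ℝ) + 1 := by push_cast; ring
  rw [hcast, div_mul_eq_mul_div, le_div_iff₀ (by positivity), mul_comm]
  calc γ * ((s : ℝ) + 1) * ‖G (x s)‖ ^ 2
      = L * ((γ / L) * ((s : ℝ) + 1) * ‖G (x s)‖ ^ 2) := by field_simp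
    _ ≤ L * R₀ ^ 2 := by
        apply mul_le_mul_of_nonneg_left _ hLpos.le
        exact hkey
    _ = L * R₀ ^ 2 := rfl
end
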